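/- Let G be a compact Hausdorff topological group with an abelian closed normal subgroup A. Suppose g ∈ G normalizes A and g has a countable Engel sink in the group A⟨g⟩. Then g has a finite Engel sink in A⟨g⟩. -/

import Mathlib

/-- The left-normed iterated commutator `[x, ₙg]`: `engel g x 0 = x` and
`engel g x (n+1) = [engel g x n, g] = (engel g x n)⁻¹ * g⁻¹ * (engel g x n) * g`. -/
def engel {G : Type*} [Group G] (g x : G) : ℕ → G
  | 0 => x
  | n + 1 => (engel g x n)⁻¹ * g⁻¹ * engel g x n * g

/-- `E` is an Engel sink of `g`: for every `x` all sufficiently long commutators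
`[x, ₙg]` lie in `E`. -/
def IsEngelSink {G : Type*} [Group G] (g : G) (E : Set G) : Prop :=
  ∀ x : G, ∃ N : ℕ, ∀ n : ℕ, N ≤ n → engel g x n ∈ E

/-- The coercion of a subgroup-valued iterated commutator to the ambient group. -/
lemma engel_subgroup_coe {G : Type*} [Group G] (H : Subgroup G) (g x : H) (n : ℕ) :
    ((engel g x n : H) : G) = engel (g : G) (x : G) n := by
  induction n with
  | zero => rfl
  | succ n ih => simp [engel, ih]

open Filter Function Set in
/-- Let `G` be a compact Hausdorff group, `A` a closed abelian normal subgroup, and `g ∈ G`.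
If `g` has a countable Engel sink in the subgroup `A⟨g⟩`, then `g` has a finite Engel sink
in `A⟨g⟩`. -/
theorem finite_sink_in_abelian_by_cyclic
    {G : Type*} [Group G] [TopologicalSpace G] [IsTopologicalGroup G]
    [CompactSpace G] [T2Space G]
    (A : Subgroup G) (hA : IsClosed (A : Set G))
    (hab : ∀ a ∈ A, ∀ b ∈ A, a * b = b * a)
    (g : G) (hnorm : ∀ a ∈ A, g⁻¹ * a * g ∈ A)
    (E : Set (A ⊔ Subgroup.zpowers g : Subgroup G))
    (hcount : E.Countable)
    (hE : IsEngelSink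
      (⟨g, Subgroup.mem_sup_right (Subgroup.mem_zpowers g)⟩ :
        (A ⊔ Subgroup.zpowers g : Subgroup G)) E) :
    ∃ F : Set (A ⊔ Subgroup.zpowers g : Subgroup G),
      IsEngelSink
        (⟨g, Subgroup.mem_sup_right (Subgroup.mem_zpowers g)⟩ :
          (A ⊔ Subgroup.zpowers g : Subgroup G)) F ∧ F.Finite := by
  classical
  set φ : G → G := fun y => y⁻¹ * g⁻¹ * y * g with hφdef
  have hφ_cont : Continuous φ := by
    simp only [hφdef]; fun_prop
  have hφ_iter : ∀ (x : G) (n : ℕ), engel g x n = φ^[n] x := by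
    intro x n
    induction n with
    | zero => rfl
    | succ n ih => rw [Function.iterate_succ_apply', ← ih]; rfl
  -- φ maps A into A
  have hφA : ∀ a ∈ A, φ a ∈ A := by
    intro a ha
    have h1 : a⁻¹ * (g⁻¹ * a * g) ∈ A := A.mul_mem (A.inv_mem ha) (hnorm a ha)
    have : φ a = a⁻¹ * (g⁻¹ * a * g) := by simp [hφdef, mul_assoc]
    rwa [this]
  -- conjugation by nonnegative powers of g keeps A
  have hpow : ∀ (n : ℕ), ∀ a ∈ A, (g ^ n)⁻¹ * a * g ^ n ∈ A := by
    intro n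
    induction n with
    | zero => intro a ha; simpa using ha
    | succ n ih =>
      intro a ha
      have h1 := hnorm _ (ih a ha)
      have : (g ^ (n + 1))⁻¹ * a * g ^ (n + 1)
          = g⁻¹ * ((g ^ n)⁻¹ * a * g ^ n) * g := by
        rw [pow_succ]; group
      rwa [this]
  -- conjugation by g⁻¹ keeps A, by compactness (1 is a cluster point of the powers of g)
  have hconj : ∀ a ∈ A, g * a * g⁻¹ ∈ A := by
    intro a ha
    have hcp : MapClusterPt (g ^ (-1 : ℤ)) atTop (g ^ · : ℕ → G) :=
      mapClusterPt_self_zpow_atTop_pow g (-1)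
    have hfc : ContinuousAt (fun x : G => x⁻¹ * a * x) (g ^ (-1 : ℤ)) := by fun_prop
    have h2 := hcp.continuousAt_comp hfc
    have hval : (g ^ (-1 : ℤ))⁻¹ * a * g ^ (-1 : ℤ) = g * a * g⁻¹ := by
      simp [zpow_neg, zpow_one]
    rw [hval] at h2
    have hle : Filter.map ((fun x : G => x⁻¹ * a * x) ∘ (g ^ · : ℕ → G)) atTop
        ≤ 𝓟 (A : Set G) := by
      rw [Filter.le_principal_iff, Filter.mem_map]
      refine Filter.Eventually.of_forall fun n => ?_
      exact hpow n a ha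
    have h3 : ClusterPt (g * a * g⁻¹) (𝓟 (A : Set G)) := h2.clusterPt.mono hle
    have h4 : g * a * g⁻¹ ∈ closure (A : Set G) := mem_closure_iff_clusterPt.mpr h3
    rwa [hA.closure_eq] at h4
  -- conjugation by arbitrary integer powers of g keeps A
  have hzpow : ∀ (k : ℤ), ∀ a ∈ A, (g ^ k)⁻¹ * a * g ^ k ∈ A := by
    intro k
    induction k using Int.induction_on with
    | zero => intro a ha; simpa using ha
    | succ n ih =>
      intro a ha
      have h1 := hnorm _ (ih a ha)
      have : (g ^ ((n : ℤ) + 1))⁻¹ * a * g ^ ((n : ℤ) + 1)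
          = g⁻¹ * ((g ^ (n : ℤ))⁻¹ * a * g ^ (n : ℤ)) * g := by
        rw [zpow_add, zpow_one]; group
      rwa [this]
    | pred n ih =>
      intro a ha
      have h1 := hconj _ (ih a ha)
      have : (g ^ (-(n : ℤ) - 1))⁻¹ * a * g ^ (-(n : ℤ) - 1)
          = g * ((g ^ (-(n : ℤ)))⁻¹ * a * g ^ (-(n : ℤ))) * g⁻¹ := by
        rw [zpow_sub, zpow_one]; group
      rwa [this]
  -- every element of H = A⟨g⟩ has the form a * g^k
  have hdecomp : ∀ x : G, x ∈ A ⊔ Subgroup.zpowers g → ∃ a ∈ A, ∃ k : ℤ, x = a * g ^ k := by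
    intro x hx
    rw [Subgroup.sup_eq_closure] at hx
    induction hx using Subgroup.closure_induction with
    | mem y hy =>
      rcases hy with hy | hy
      · exact ⟨y, hy, 0, by simp⟩
      · rcases hy with ⟨k, rfl⟩
        exact ⟨1, A.one_mem, k, by simp⟩
    | one => exact ⟨1, A.one_mem, 0, by simp⟩
    | mul y z _ _ hy hz =>
      rcases hy with ⟨a, ha, j, rfl⟩
      rcases hz with ⟨b, hb, k, rfl⟩
      refine ⟨a * (g ^ j * b * (g ^ j)⁻¹), ?_, j + k, by group⟩
      have hb' : (g ^ (-j))⁻¹ * b * g ^ (-j) ∈ A := hzpow (-j) b hb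
      have : g ^ j * b * (g ^ j)⁻¹ = (g ^ (-j))⁻¹ * b * g ^ (-j) := by group
      rw [this]
      exact A.mul_mem ha hb'
    | inv y _ hy =>
      rcases hy with ⟨a, ha, k, rfl⟩
      refine ⟨g ^ (-k) * a⁻¹ * (g ^ (-k))⁻¹, ?_, -k, by group⟩
      have : g ^ (-k) * a⁻¹ * (g ^ (-k))⁻¹ = (g ^ k)⁻¹ * a⁻¹ * g ^ k := by group
      rw [this]
      exact hzpow k a⁻¹ (A.inv_mem ha)
  -- φ maps H into A
  have hφH : ∀ x : G, x ∈ A ⊔ Subgroup.zpowers g → φ x ∈ A := by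
    intro x hx
    rcases hdecomp x hx with ⟨a, ha, k, rfl⟩
    have : φ (a * g ^ k) = (g ^ k)⁻¹ * φ a * g ^ k := by
      simp only [hφdef]; group
    rw [this]
    exact hzpow k _ (hφA a ha)
  -- φ is multiplicative on A
  have hmul : ∀ a ∈ A, ∀ b ∈ A, φ (a * b) = φ a * φ b := by
    intro a ha b hb
    have hca : g⁻¹ * a * g ∈ A := hnorm a ha
    have h1 : b⁻¹ * (a⁻¹ * (g⁻¹ * a * g)) = a⁻¹ * (g⁻¹ * a * g) * b⁻¹ :=
      hab _ (A.inv_mem hb) _ (A.mul_mem (A.inv_mem ha) hca)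
    have e1 : φ (a * b) = b⁻¹ * (a⁻¹ * (g⁻¹ * a * g)) * (g⁻¹ * b * g) := by
      simp only [hφdef]; group
    have e2 : φ a * φ b = a⁻¹ * (g⁻¹ * a * g) * b⁻¹ * (g⁻¹ * b * g) := by
      simp only [hφdef]; group
    rw [e1, e2, h1]
  -- iterates of φ on A
  have hiterA : ∀ (n : ℕ), ∀ a ∈ A, φ^[n] a ∈ A := by
    intro n
    induction n with
    | zero => intro a ha; simpa using ha
    | succ n ih =>
      intro a ha
      rw [Function.iterate_succ_apply']
      exact hφA _ (ih a ha)
  have hitermul : ∀ (n : ℕ), ∀ a ∈ A, ∀ b ∈ A, φ^[n] (a * b) = φ^[n] a * φ^[n] b := by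
    intro n
    induction n with
    | zero => intro a _ b _; simp
    | succ n ih =>
      intro a ha b hb
      simp only [Function.iterate_succ_apply']
      rw [ih a ha b hb, hmul _ (hiterA n a ha) _ (hiterA n b hb)]
  have hφone : φ 1 = 1 := by simp [hφdef]
  have hiterinv : ∀ (n : ℕ), ∀ a ∈ A, φ^[n] a⁻¹ = (φ^[n] a)⁻¹ := by
    intro n a ha
    have h1 : φ^[n] a⁻¹ * φ^[n] a = 1 := by
      rw [← hitermul n a⁻¹ (A.inv_mem ha) a ha]
      simp [Function.iterate_fixed hφone]
    exact eq_inv_of_mul_eq_one_left h1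
  -- topological structure on A
  haveI : CompactSpace (A : Subgroup G) := isCompact_iff_compactSpace.mp hA.isCompact
  haveI : Nonempty (A : Subgroup G) := ⟨1⟩
  -- Baire category: split A into countably many closed pieces
  set E' : Set G := Subtype.val '' E with hE'def
  have hE'c : E'.Countable := hcount.image _
  haveI := hE'c.to_subtype
  set C : ℕ × E' → Set (A : Subgroup G) := fun p => {a : A | φ^[p.1] (a : G) = (p.2 : G)}
    with hCdef
  have hCclosed : ∀ p, IsClosed (C p) := by
    intro p
    have hc : Continuous fun a : A => φ^[p.1] (a : G) :=
      (hφ_cont.iterate p.1).comp continuous_subtype_val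
    exact isClosed_singleton.preimage hc
  have hCcover : ⋃ p, C p = Set.univ := by
    refine Set.eq_univ_of_forall fun a => Set.mem_iUnion.mpr ?_
    have haH : (a : G) ∈ A ⊔ Subgroup.zpowers g := Subgroup.mem_sup_left a.2
    obtain ⟨N, hN⟩ := hE ⟨(a : G), haH⟩
    have key : φ^[N] (a : G) =
        ((engel (⟨g, Subgroup.mem_sup_right (Subgroup.mem_zpowers g)⟩ :
          (A ⊔ Subgroup.zpowers g : Subgroup G)) ⟨(a : G), haH⟩ N :
          (A ⊔ Subgroup.zpowers g : Subgroup G)) : G) := by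
      rw [engel_subgroup_coe, hφ_iter]
    exact ⟨(N, ⟨_, ⟨_, hN N le_rfl, rfl⟩⟩), key⟩
  obtain ⟨⟨N, e⟩, hint⟩ := nonempty_interior_of_iUnion_of_closed hCclosed hCcover
  obtain ⟨u₀, hu₀⟩ := hint
  -- translate the interior to an open set in G
  obtain ⟨W, hWopen, hWeq⟩ := isOpen_induced_iff.mp (isOpen_interior
    (s := C (N, e)))
  have hu₀W : (u₀ : G) ∈ W := by
    have h := hu₀; rw [← hWeq] at h; exact h
  have hWconst : ∀ b : (A : Subgroup G), (b : G) ∈ W → φ^[N] (b : G) = (e : G) := by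
    intro b hb
    have hbint : b ∈ interior (C (N, e)) := by rw [← hWeq]; exact hb
    have hbmem : b ∈ C (N, e) := interior_subset hbint
    exact hbmem
  -- compactness: finitely many translates of W cover A
  have hAcomp : IsCompact (A : Set G) := hA.isCompact
  have hcover : (A : Set G) ⊆ ⋃ b : (A : Subgroup G),
      (fun x : G => (u₀ : G) * (b : G)⁻¹ * x) ⁻¹' W := by
    intro a ha
    refine Set.mem_iUnion.mpr ⟨⟨a, ha⟩, ?_⟩
    show (u₀ : G) * a⁻¹ * a ∈ W
    simpa using hu₀W
  obtain ⟨t, ht⟩ := hAcomp.elim_finite_subcover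
    (fun b : (A : Subgroup G) => (fun x : G => (u₀ : G) * (b : G)⁻¹ * x) ⁻¹' W)
    (fun b => hWopen.preimage (by fun_prop)) hcover
  -- the image of A under φ^[N] is contained in a finite set
  have himage : ∀ a ∈ A, ∃ b ∈ t, φ^[N] a = φ^[N] (b : G) := by
    intro a ha
    obtain ⟨b, hbt, hbW⟩ := Set.mem_iUnion₂.mp (ht ha)
    have hbW' : (u₀ : G) * (b : G)⁻¹ * a ∈ W := hbW
    have hmemA : (u₀ : G) * (b : G)⁻¹ * a ∈ A :=
      A.mul_mem (A.mul_mem u₀.2 (A.inv_mem b.2)) ha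
    have h1 : φ^[N] ((u₀ : G) * (b : G)⁻¹ * a) = (e : G) :=
      hWconst ⟨_, hmemA⟩ hbW'
    have h2 : φ^[N] ((u₀ : G) * (b : G)⁻¹ * a)
        = φ^[N] (u₀ : G) * (φ^[N] (b : G))⁻¹ * φ^[N] a := by
      rw [hitermul N _ (A.mul_mem u₀.2 (A.inv_mem b.2)) a ha,
        hitermul N _ u₀.2 _ (A.inv_mem b.2), hiterinv N _ b.2]
    have h3 : φ^[N] (u₀ : G) = (e : G) := hWconst u₀ hu₀W
    refine ⟨b, hbt, ?_⟩
    rw [h1, h3] at h2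
    -- h2 : (e) = (e) * (φ^[N] b)⁻¹ * φ^[N] a
    have h6 : (e : G) * ((φ^[N] (b : G))⁻¹ * φ^[N] a) = (e : G) * 1 := by
      rw [mul_one, ← mul_assoc, ← h2]
    have h7 := mul_left_cancel h6
    exact (inv_mul_eq_one.mp h7).symm
  -- the finite sink
  set Im : Set G := (fun b : (A : Subgroup G) => φ^[N] (b : G)) '' ↑t with hImdef
  have hImfin : Im.Finite := t.finite_toSet.image _
  refine ⟨Subtype.val ⁻¹' Im, ?_, hImfin.preimage Subtype.val_injective.injOn⟩
  intro x
  refine ⟨N + 1, fun n hn => ?_⟩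
  show ((engel (⟨g, Subgroup.mem_sup_right (Subgroup.mem_zpowers g)⟩ :
      (A ⊔ Subgroup.zpowers g : Subgroup G)) x n : (A ⊔ Subgroup.zpowers g : Subgroup G)) : G) ∈ Im
  rw [engel_subgroup_coe, hφ_iter]
  obtain ⟨m, rfl⟩ : ∃ m, n = N + (m + 1) := ⟨n - N - 1, by omega⟩
  have hx1 : φ (x : G) ∈ A := hφH _ x.2
  have hxm : φ^[m] (φ (x : G)) ∈ A := hiterA m _ hx1
  have key : φ^[N + (m + 1)] (x : G) = φ^[N] (φ^[m] (φ (x : G))) := by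
    rw [Function.iterate_add_apply, Function.iterate_succ_apply]
  rw [key]
  obtain ⟨b, hbt, hb⟩ := himage _ hxm
  exact ⟨b, hbt, hb.symm⟩
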